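/- For any 0 < β < ∞, KL(G_β, G_{2β}) ≤ β (E_{h∼G_β}[L̂(h)] - E_{h∼G_{2β}}[L̂(h)]). -/

import Mathlib

open MeasureTheory
open scoped ENNReal NNReal

/-- The partition function `Z_β(x) = ∫ exp (-β L̂(h,x)) dπ(h)` (the sample `x` is fixed). -/
noncomputable def partitionZ {H : Type*} [MeasurableSpace H] (pri : Measure H)
    (Lhat : H → ℝ) (β : ℝ) : ℝ :=
  ∫ h, Real.exp (-β * Lhat h) ∂pri

/-- The Gibbs posterior `G_β(x)`, with density `exp(-β L̂(h,x))/Z_β(x)` w.r.t. the prior `π`. -/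
noncomputable def gibbs {H : Type*} [MeasurableSpace H] (pri : Measure H)
    (Lhat : H → ℝ) (β : ℝ) : Measure H :=
  pri.withDensity (fun h => ENNReal.ofReal (Real.exp (-β * Lhat h) / partitionZ pri Lhat β))

/-- Kullback–Leibler divergence `KL(ρ,ν) = ∫ ln (dρ/dν) dρ`. -/
noncomputable def klDiv {H : Type*} [MeasurableSpace H] (ρ ν : Measure H) : ℝ :=
  ∫ h, Real.log ((ρ.rnDeriv ν h).toReal) ∂ρ

section Aux

variable {H : Type*} [MeasurableSpace H] (pri : Measure H) [IsProbabilityMeasure pri]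
    (Lhat : H → ℝ) (hmeas : Measurable Lhat) (hnonneg : ∀ h, 0 ≤ Lhat h)
    (m : ℝ) (hbound : ∀ h, Lhat h ≤ m)

include hmeas hnonneg hbound in
lemma integrable_exp_mul (c : ℝ) :
    Integrable (fun h => Real.exp (c * Lhat h)) pri := by
  refine (integrable_const (Real.exp (|c| * m))).mono'
    ((hmeas.const_mul c).exp.aestronglyMeasurable) ?_
  filter_upwards with h
  rw [Real.norm_eq_abs, Real.abs_exp]
  have hm0 : (0:ℝ) ≤ m := (hnonneg h).trans (hbound h)
  have h1 := le_abs_self c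
  have h2 := abs_nonneg c
  have h3 := hnonneg h
  have h4 := hbound h
  exact Real.exp_le_exp.2 (by nlinarith)

include hmeas hnonneg hbound in
lemma partitionZ_pos (γ : ℝ) : 0 < partitionZ pri Lhat γ := by
  have hint := integrable_exp_mul pri Lhat hmeas hnonneg m hbound (-γ)
  have h1 : Real.exp (-(|γ| * m)) = ∫ _h, Real.exp (-(|γ| * m)) ∂pri := by simp
  have h2 : (∫ _h, Real.exp (-(|γ| * m)) ∂pri) ≤ partitionZ pri Lhat γ := by
    refine integral_mono (integrable_const _) hint fun h => ?_
    have hm0 : (0:ℝ) ≤ m := (hnonneg h).trans (hbound h)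
    have h1 := le_abs_self γ
    have h2 := abs_nonneg γ
    have h3 := hnonneg h
    have h4 := hbound h
    exact Real.exp_le_exp.2 (by nlinarith)
  have := (Real.exp_pos (-(|γ| * m))).trans_le (h1.le.trans h2)
  exact this

include hmeas hnonneg hbound in
lemma isProbability_gibbs (γ : ℝ) : IsProbabilityMeasure (gibbs pri Lhat γ) := by
  have hZ := partitionZ_pos pri Lhat hmeas hnonneg m hbound γ
  have hint : Integrable (fun h => Real.exp (-γ * Lhat h) / partitionZ pri Lhat γ) pri :=
    (integrable_exp_mul pri Lhat hmeas hnonneg m hbound (-γ)).div_const _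
  constructor
  rw [gibbs, withDensity_apply _ MeasurableSet.univ, setLIntegral_univ,
    ← ofReal_integral_eq_lintegral_ofReal hint
      (Filter.Eventually.of_forall fun h => by positivity)]
  rw [integral_div]
  rw [show (∫ h, Real.exp (-γ * Lhat h) ∂pri) = partitionZ pri Lhat γ from rfl,
    div_self hZ.ne', ENNReal.ofReal_one]

include hmeas hnonneg hbound in
lemma integral_gibbs (γ : ℝ) (g : H → ℝ) :
    (∫ h, g h ∂(gibbs pri Lhat γ))
      = ∫ h, (Real.exp (-γ * Lhat h) / partitionZ pri Lhat γ) * g h ∂pri := by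
  have hm : Measurable fun h => (Real.exp (-γ * Lhat h) / partitionZ pri Lhat γ).toNNReal :=
    ((hmeas.const_mul (-γ)).exp.div_const _).real_toNNReal
  rw [gibbs]
  rw [show (fun h => ENNReal.ofReal (Real.exp (-γ * Lhat h) / partitionZ pri Lhat γ))
      = (fun h => ((Real.exp (-γ * Lhat h) / partitionZ pri Lhat γ).toNNReal : ℝ≥0∞)) from rfl]
  rw [integral_withDensity_eq_integral_smul hm g]
  refine integral_congr_ae (Filter.Eventually.of_forall fun h => ?_)
  have hd : 0 ≤ Real.exp (-γ * Lhat h) / partitionZ pri Lhat γ :=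
    div_nonneg (le_of_lt (Real.exp_pos _)) (le_of_lt (partitionZ_pos pri Lhat hmeas hnonneg m hbound γ))
  simp only [NNReal.smul_def, smul_eq_mul, Real.coe_toNNReal _ hd]

end Aux

/-- for `0 < β < ∞`,
`KL(G_β, G_{2β}) ≤ β (E_{G_β}[L̂] - E_{G_{2β}}[L̂])`. -/
theorem klDiv_gibbs_le {H : Type*} [MeasurableSpace H]
    (pri : Measure H) [IsProbabilityMeasure pri]
    (Lhat : H → ℝ) (hmeas : Measurable Lhat) (hnonneg : ∀ h, 0 ≤ Lhat h)
    (m : ℝ) (hbound : ∀ h, Lhat h ≤ m) (β : ℝ) (hβ : 0 < β) :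
    klDiv (gibbs pri Lhat β) (gibbs pri Lhat (2 * β))
      ≤ β * ((∫ h, Lhat h ∂(gibbs pri Lhat β))
              - (∫ h, Lhat h ∂(gibbs pri Lhat (2 * β)))) := by
  set Z1 := partitionZ pri Lhat β with hZ1def
  set Z2 := partitionZ pri Lhat (2 * β) with hZ2def
  have hZ1 : 0 < Z1 := partitionZ_pos pri Lhat hmeas hnonneg m hbound β
  have hZ2 : 0 < Z2 := partitionZ_pos pri Lhat hmeas hnonneg m hbound (2 * β)
  haveI hP1 : IsProbabilityMeasure (gibbs pri Lhat β) :=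
    isProbability_gibbs pri Lhat hmeas hnonneg m hbound β
  haveI hP2 : IsProbabilityMeasure (gibbs pri Lhat (2 * β)) :=
    isProbability_gibbs pri Lhat hmeas hnonneg m hbound (2 * β)
  set r : H → ℝ≥0∞ := fun h => ENNReal.ofReal (Real.exp (β * Lhat h) * (Z2 / Z1)) with hrdef
  have hrmeas : Measurable r := ((hmeas.const_mul β).exp.mul_const _).ennreal_ofReal
  -- the density of G_β with respect to G_{2β}
  have hkey : gibbs pri Lhat β = (gibbs pri Lhat (2 * β)).withDensity r := by
    rw [gibbs, gibbs,
      ← withDensity_mul _ (((hmeas.const_mul (-(2 * β))).exp.div_const _).ennreal_ofReal) hrmeas]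
    congr 1
    funext h
    rw [Pi.mul_apply, hrdef, ← ENNReal.ofReal_mul (by positivity)]
    congr 1
    have hexp : Real.exp (-(2 * β) * Lhat h) * Real.exp (β * Lhat h)
        = Real.exp (-β * Lhat h) := by
      rw [← Real.exp_add]; ring_nf
    have hres : Real.exp (-(2 * β) * Lhat h) / Z2 * (Real.exp (β * Lhat h) * (Z2 / Z1))
        = Real.exp (-(2 * β) * Lhat h) * Real.exp (β * Lhat h) * (Z2 / Z2) / Z1 := by ring
    rw [hres, hexp, div_self hZ2.ne', mul_one]
  have hrn : (gibbs pri Lhat β).rnDeriv (gibbs pri Lhat (2 * β)) =ᵐ[gibbs pri Lhat (2 * β)] r := by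
    rw [hkey]; exact Measure.rnDeriv_withDensity _ hrmeas
  have hac : gibbs pri Lhat β ≪ gibbs pri Lhat (2 * β) := by
    rw [hkey]; exact withDensity_absolutelyContinuous _ _
  have hrn' : ∀ᵐ h ∂(gibbs pri Lhat β),
      (gibbs pri Lhat β).rnDeriv (gibbs pri Lhat (2 * β)) h = r h := hrn.filter_mono hac.ae_le
  -- integrability of Lhat w.r.t. the Gibbs measures
  have hLi : ∀ γ : ℝ, Integrable Lhat (gibbs pri Lhat γ) → True := fun _ _ => trivial
  have hLint : ∀ (μ : Measure H) [IsFiniteMeasure μ], Integrable Lhat μ := by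
    intro μ _
    refine (integrable_const m).mono' hmeas.aestronglyMeasurable ?_
    filter_upwards with h
    rw [Real.norm_eq_abs, abs_of_nonneg (hnonneg h)]
    exact hbound h
  have hLi1 : Integrable Lhat (gibbs pri Lhat β) := hLint _
  have hLi2 : Integrable Lhat (gibbs pri Lhat (2 * β)) := hLint _
  -- value of the KL divergence
  have hKL : klDiv (gibbs pri Lhat β) (gibbs pri Lhat (2 * β))
      = β * (∫ h, Lhat h ∂(gibbs pri Lhat β)) + (Real.log Z2 - Real.log Z1) := by
    rw [klDiv]
    have hcongr : (∫ h, Real.log (((gibbs pri Lhat β).rnDeriv (gibbs pri Lhat (2 * β)) h).toReal)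
          ∂(gibbs pri Lhat β))
        = ∫ h, (β * Lhat h + (Real.log Z2 - Real.log Z1)) ∂(gibbs pri Lhat β) := by
      refine integral_congr_ae ?_
      filter_upwards [hrn'] with h hh
      rw [hh, hrdef, ENNReal.toReal_ofReal (by positivity),
        Real.log_mul (Real.exp_ne_zero _) (by positivity), Real.log_exp,
        Real.log_div hZ2.ne' hZ1.ne']
    rw [hcongr, integral_add (hLi1.const_mul β) (integrable_const _), integral_const_mul,
      integral_const, probReal_univ, one_smul]
  -- Jensen's inequality
  have hexpint : Integrable (fun h => Real.exp (β * Lhat h)) (gibbs pri Lhat (2 * β)) := by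
    refine (integrable_const (Real.exp (|β| * m))).mono'
      ((hmeas.const_mul β).exp.aestronglyMeasurable) ?_
    filter_upwards with h
    rw [Real.norm_eq_abs, Real.abs_exp]
    have hm0 : (0:ℝ) ≤ m := (hnonneg h).trans (hbound h)
    have h1 := le_abs_self β
    have h2 := abs_nonneg β
    have h3 := hnonneg h
    have h4 := hbound h
    exact Real.exp_le_exp.2 (by nlinarith)
  have hJ : Real.exp (∫ h, β * Lhat h ∂(gibbs pri Lhat (2 * β)))
      ≤ ∫ h, Real.exp (β * Lhat h) ∂(gibbs pri Lhat (2 * β)) :=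
    convexOn_exp.map_integral_le Real.continuous_exp.continuousOn isClosed_univ
      (Filter.Eventually.of_forall fun h => Set.mem_univ _) (hLi2.const_mul β) hexpint
  -- the exponential moment equals Z1/Z2
  have hZratio : (∫ h, Real.exp (β * Lhat h) ∂(gibbs pri Lhat (2 * β))) = Z1 / Z2 := by
    rw [integral_gibbs pri Lhat hmeas hnonneg m hbound (2 * β)]
    have hpt : ∀ h, Real.exp (-(2 * β) * Lhat h) / Z2 * Real.exp (β * Lhat h)
        = Real.exp (-β * Lhat h) / Z2 := by
      intro h
      rw [div_mul_eq_mul_div, ← Real.exp_add]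
      ring_nf
    rw [← hZ2def]
    simp_rw [hpt]
    rw [integral_div]
    rfl
  have hlog : β * (∫ h, Lhat h ∂(gibbs pri Lhat (2 * β))) ≤ Real.log Z1 - Real.log Z2 := by
    rw [← Real.log_div hZ1.ne' hZ2.ne', Real.le_log_iff_exp_le (div_pos hZ1 hZ2), ← hZratio]
    calc Real.exp (β * ∫ h, Lhat h ∂(gibbs pri Lhat (2 * β)))
        = Real.exp (∫ h, β * Lhat h ∂(gibbs pri Lhat (2 * β))) := by rw [integral_const_mul]
      _ ≤ _ := hJ
  rw [hKL]
  linarith
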